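/- Let H be a complex separable Hilbert space, K a bounded linear operator on H with closed range R(K), and P the orthogonal projection of H onto R(K). Let (f_k)_{k∈I} be a Bessel sequence in H with synthesis operator T_F and frame operator S = T_F T_F*, and let Q be a bounded linear operator on H satisfying P S Q* y = y for every y ∈ R(K). Then a Bessel sequence (g_k)_{k∈I} is a K-dual of (P f_k)_{k∈I} if and only if there exists a bounded linear operator M : H → ℓ²(I) such that P T_F M = 0 and g_k = K* Q f_k + M* e_k for every k ∈ I, where (e_k) is the standard orthonormal basis of ℓ²(I). (For the converse direction the operator M = T_G* − T_F* Q* K works, where T_G is the synthesis operator of (g_k).) -/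

import Mathlib

open ContinuousLinearMap

section Aux

variable {H : Type*} [NormedAddCommGroup H] [InnerProductSpace ℂ H]
  {I : Type*} [DecidableEq I]

/-- Expansion of a continuous linear map on `ℓ²` along the standard basis. -/
lemma aux_clm_hasSum (A : lp (fun _ : I => ℂ) 2 →L[ℂ] H) (a : lp (fun _ : I => ℂ) 2) :
    HasSum (fun k => a k • A (lp.single 2 k 1)) (A a) := by
  have h := (lp.hasSum_single (E := fun _ : I => ℂ) ENNReal.ofNat_ne_top a).mapL A
  refine h.congr_fun fun k => ?_
  have hsingle : lp.single (E := fun _ : I => ℂ) 2 k (a k) =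
      a k • lp.single (E := fun _ : I => ℂ) 2 k (1 : ℂ) := by
    apply lp.ext
    funext j
    by_cases hj : j = k
    · subst hj
      simp [lp.single_apply]
    · simp [lp.single_apply, hj]
  rw [hsingle, map_smul]

/-- Analysis operator of a Bessel sequence. -/
lemma aux_analysis (g : I → H) {D : ℝ} (hD : 0 < D)
    (h : ∀ x : H, Summable (fun k => ‖(inner ℂ (g k) x : ℂ)‖ ^ 2) ∧
      ∑' k, ‖(inner ℂ (g k) x : ℂ)‖ ^ 2 ≤ D * ‖x‖ ^ 2) :
    ∃ A : H →L[ℂ] lp (fun _ : I => ℂ) 2, ∀ (x : H) (k : I), A x k = inner ℂ (g k) x := by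
  have htr : (2 : ENNReal).toReal = (2 : ℝ) := by norm_num
  have hpow : ∀ t : ℝ, t ^ ((2 : ENNReal).toReal) = t ^ (2 : ℕ) := by
    intro t
    rw [htr, show (2 : ℝ) = ((2 : ℕ) : ℝ) by norm_num, Real.rpow_natCast]
  have hmem : ∀ x : H, Memℓp (fun k => (inner ℂ (g k) x : ℂ)) 2 := by
    intro x
    apply memℓp_gen
    refine (h x).1.congr fun k => ?_
    rw [hpow]
  let L : H →ₗ[ℂ] lp (fun _ : I => ℂ) 2 :=
    { toFun := fun x => ⟨fun k => (inner ℂ (g k) x : ℂ), hmem x⟩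
      map_add' := by
        intro x y
        apply lp.ext
        funext k
        simp [inner_add_right]
        rfl
      map_smul' := by
        intro c x
        apply lp.ext
        funext k
        simp [inner_smul_right] }
  refine ⟨L.mkContinuous (Real.sqrt D) ?_, fun x k => rfl⟩
  intro x
  have hnorm : ‖L x‖ ^ (2 : ℕ) = ∑' k, ‖(inner ℂ (g k) x : ℂ)‖ ^ 2 := by
    have h1 := lp.norm_rpow_eq_tsum (p := 2) (by norm_num) (L x)
    rw [hpow] at h1
    rw [h1]
    exact tsum_congr fun k => by rw [hpow]; rfl
  have h2 : ‖L x‖ ^ 2 ≤ D * ‖x‖ ^ 2 := by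
    rw [hnorm]; exact (h x).2
  calc ‖L x‖ ≤ Real.sqrt (D * ‖x‖ ^ 2) := Real.le_sqrt_of_sq_le h2
    _ = Real.sqrt D * ‖x‖ := by
        rw [Real.sqrt_mul hD.le, Real.sqrt_sq (norm_nonneg _)]

end Aux

/-- characterization of all `K`-duals of `(P f_k)` in terms of the canonical
`K`-dual `(K* Q f_k)`: a Bessel sequence `(g k)` is a `K`-dual of `(P f_k)` iff there is a
bounded operator `M : H → ℓ²(I)` with `P T_F M = 0` and `g k = K* Q f_k + M* e_k`. -/
theorem K_dual_characterization_closed_range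
    {H : Type*} [NormedAddCommGroup H] [InnerProductSpace ℂ H]
    [CompleteSpace H] [TopologicalSpace.SeparableSpace H]
    {I : Type*} [Countable I] [DecidableEq I]
    (K P Q : H →L[ℂ] H) (f g : I → H)
    (TF : lp (fun _ : I => ℂ) 2 →L[ℂ] H)
    (hTF : ∀ k, TF (lp.single 2 k 1) = f k)
    (hK : IsClosed (Set.range ⇑K))
    (hPmem : ∀ x : H, P x ∈ Set.range ⇑K)
    (hPfix : ∀ y ∈ Set.range ⇑K, P y = y)
    (hPsa : adjoint P = P)
    (hf : ∃ B : ℝ, 0 < B ∧ ∀ x : H, Summable (fun k => ‖(inner ℂ (f k) x : ℂ)‖ ^ 2) ∧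
      ∑' k, ‖(inner ℂ (f k) x : ℂ)‖ ^ 2 ≤ B * ‖x‖ ^ 2)
    (hg : ∃ D : ℝ, 0 < D ∧ ∀ x : H, Summable (fun k => ‖(inner ℂ (g k) x : ℂ)‖ ^ 2) ∧
      ∑' k, ‖(inner ℂ (g k) x : ℂ)‖ ^ 2 ≤ D * ‖x‖ ^ 2)
    (hQ : ∀ y ∈ Set.range ⇑K, P (TF ((adjoint TF) ((adjoint Q) y))) = y) :
    (∀ x : H, HasSum (fun k => (inner ℂ (g k) x : ℂ) • P (f k)) (K x)) ↔
      ∃ M : H →L[ℂ] lp (fun _ : I => ℂ) 2,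
        P.comp (TF.comp M) = 0 ∧
        ∀ k, g k = (adjoint K) (Q (f k)) + (adjoint M) (lp.single 2 k 1) := by
  -- coordinates of the adjoint of TF
  have hTFadj : ∀ (x : H) (k : I), (adjoint TF) x k = (inner ℂ (f k) x : ℂ) := by
    intro x k
    have h1 : (inner ℂ (lp.single 2 k (1:ℂ)) ((adjoint TF) x) : ℂ) = (adjoint TF) x k := by
      rw [lp.inner_single_left]
      simp [RCLike.inner_apply]
    rw [← h1, adjoint_inner_right, hTF]
  constructor
  · -- forward: construct M from the analysis operator of g
    intro h
    obtain ⟨D, hD, hDx⟩ := hg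
    obtain ⟨A, hA⟩ := aux_analysis g hD hDx
    refine ⟨A - (adjoint TF).comp ((adjoint Q).comp K), ?_, ?_⟩
    · ext x
      have hsum1 : HasSum (fun k => (A x) k • (P.comp TF) (lp.single 2 k 1))
          ((P.comp TF) (A x)) := aux_clm_hasSum (P.comp TF) (A x)
      have hsum2 : HasSum (fun k => (inner ℂ (g k) x : ℂ) • P (f k)) (P (TF (A x))) := by
        refine hsum1.congr_fun fun k => ?_
        rw [hA x k]
        simp [hTF]
      have h1 : P (TF (A x)) = K x := hsum2.unique (h x)
      have h2 : P (TF ((adjoint TF) ((adjoint Q) (K x)))) = K x :=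
        hQ (K x) ⟨x, rfl⟩
      simp only [ContinuousLinearMap.comp_apply, ContinuousLinearMap.sub_apply,
        map_sub, ContinuousLinearMap.zero_apply]
      rw [h1, h2, sub_self]
    · intro k
      have hM : (adjoint (A - (adjoint TF).comp ((adjoint Q).comp K)))
          (lp.single 2 k 1) = g k - (adjoint K) (Q (f k)) := by
        refine ext_inner_right ℂ fun x => ?_
        rw [adjoint_inner_left, ContinuousLinearMap.sub_apply, inner_sub_right,
          inner_sub_left]
        congr 1
        · rw [lp.inner_single_left, hA x k]
          simp [RCLike.inner_apply]
        · rw [ContinuousLinearMap.comp_apply, ContinuousLinearMap.comp_apply,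
            lp.inner_single_left]
          simp only [RCLike.inner_apply, map_one, one_mul, mul_one]
          rw [hTFadj, adjoint_inner_right, adjoint_inner_left]
      rw [hM]
      abel
  · -- converse
    rintro ⟨M, hM0, hMg⟩ x
    set a : lp (fun _ : I => ℂ) 2 := (adjoint TF) ((adjoint Q) (K x)) + M x with ha
    have hak : ∀ k, a k = (inner ℂ (g k) x : ℂ) := by
      intro k
      have hMk : (M x) k = (inner ℂ ((adjoint M) (lp.single 2 k 1)) x : ℂ) := by
        rw [adjoint_inner_left, lp.inner_single_left]
        simp [RCLike.inner_apply]
      have hcoord : a k = (adjoint TF) ((adjoint Q) (K x)) k + (M x) k := rfl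
      rw [hcoord, hTFadj, hMk, hMg k, inner_add_left, adjoint_inner_left,
        adjoint_inner_right, adjoint_inner_left]
    have hsum : HasSum (fun k => a k • (P.comp TF) (lp.single 2 k 1)) ((P.comp TF) a) :=
      aux_clm_hasSum (P.comp TF) a
    have hPa : (P.comp TF) a = K x := by
      have hM0x : P (TF (M x)) = 0 := by
        have := congrArg (fun T => T x) hM0
        simpa using this
      have h2 : P (TF ((adjoint TF) ((adjoint Q) (K x)))) = K x := hQ (K x) ⟨x, rfl⟩
      simp only [ContinuousLinearMap.comp_apply, ha, map_add]
      rw [h2, hM0x, add_zero]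
    rw [hPa] at hsum
    refine hsum.congr_fun fun k => ?_
    rw [hak k]
    simp [hTF]
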